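/- Let K ≥ 2, let n₁, …, n_K be positive integers, write u_k = 1_{n_k}/√n_k, and let c_{kj} ∈ ℝ. Let U ∈ ℝ^{(K−1)×(K−1)} be symmetric with I_{K−1} − U invertible, and suppose Y_k ∈ ℝ^{n_k×(K−1)} satisfy, for every k: Y_k − Σ_{j=1}^K c_{kj} u_k u_jᵀ Y_j − Y_k U = 0. Then for every k, Y_k = u_k b_kᵀ where b_k = (I_{K−1} − U)^{-1} Σ_{j=1}^K c_{kj} Y_jᵀ u_j; in particular every row of Y_k equals b_kᵀ/√n_k, i.e. all nodes in community k have identical row representation. -/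
import Mathlib


open Matrix

/-- The normalized all-ones vector `1_m / √m`. -/
noncomputable def uvec (m : ℕ) : Fin m → ℝ := fun _ => (Real.sqrt m)⁻¹

theorem stmt_10
    (K : ℕ) (hK : 2 ≤ K)
    (nsz : Fin K → ℕ) (hnsz : ∀ k, 0 < nsz k)
    (c : Fin K → Fin K → ℝ)
    (U : Matrix (Fin (K - 1)) (Fin (K - 1)) ℝ) (hUsymm : U.IsSymm)
    (hUinv : IsUnit (1 - U))
    (Y : (k : Fin K) → Matrix (Fin (nsz k)) (Fin (K - 1)) ℝ)
    (hopt : ∀ k, Y k -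
      (∑ j, c k j • Matrix.vecMulVec (uvec (nsz k)) ((Y j)ᵀ.mulVec (uvec (nsz j)))) -
      Y k * U = 0) :
    ∀ k, Y k = Matrix.vecMulVec (uvec (nsz k))
        ((1 - U)⁻¹.mulVec (∑ j, c k j • (Y j)ᵀ.mulVec (uvec (nsz j)))) ∧
      ∀ (a : Fin (nsz k)) (col : Fin (K - 1)),
        Y k a col =
          (1 - U)⁻¹.mulVec (∑ j, c k j • (Y j)ᵀ.mulVec (uvec (nsz j))) col /
            Real.sqrt (nsz k) := by
  have hdet : IsUnit (1 - U).det := (Matrix.isUnit_iff_isUnit_det _).mp hUinv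
  have hsymm : ((1 - U)⁻¹)ᵀ = (1 - U)⁻¹ := by
    rw [Matrix.transpose_nonsing_inv]
    congr 1
    rw [Matrix.transpose_sub, Matrix.transpose_one, hUsymm.eq]
  intro k
  set S : Fin (K - 1) → ℝ := ∑ j, c k j • (Y j)ᵀ.mulVec (uvec (nsz j)) with hS
  have h1 : Y k * (1 - U) =
      ∑ j, c k j • Matrix.vecMulVec (uvec (nsz k)) ((Y j)ᵀ.mulVec (uvec (nsz j))) := by
    have h0 : Y k - Y k * U -
        (∑ j, c k j • Matrix.vecMulVec (uvec (nsz k)) ((Y j)ᵀ.mulVec (uvec (nsz j)))) = 0 := by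
      rw [← hopt k]; abel
    rw [Matrix.mul_sub, Matrix.mul_one]
    exact sub_eq_zero.mp h0
  have h2 : (∑ j, c k j • Matrix.vecMulVec (uvec (nsz k)) ((Y j)ᵀ.mulVec (uvec (nsz j))))
      = Matrix.vecMulVec (uvec (nsz k)) S := by
    ext a b
    simp only [Matrix.sum_apply, Finset.sum_apply, Matrix.smul_apply, Matrix.vecMulVec_apply, smul_eq_mul,
      Pi.smul_apply, hS]
    rw [Finset.mul_sum]
    exact Finset.sum_congr rfl (fun j _ => by ring)
  have h3 : Y k = Matrix.vecMulVec (uvec (nsz k)) S * (1 - U)⁻¹ := by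
    rw [← h2, ← h1, Matrix.mul_nonsing_inv_cancel_right _ _ hdet]
  have h4 : Matrix.vecMulVec (uvec (nsz k)) S * (1 - U)⁻¹
      = Matrix.vecMulVec (uvec (nsz k)) ((1 - U)⁻¹.mulVec S) := by
    ext a b
    simp only [Matrix.mul_apply, Matrix.vecMulVec_apply, Matrix.mulVec, dotProduct]
    rw [Finset.mul_sum]
    refine Finset.sum_congr rfl (fun x _ => ?_)
    have : (1 - U)⁻¹ b x = (1 - U)⁻¹ x b := by
      conv_lhs => rw [← hsymm]
      rfl
    rw [this]; ring
  have hmain : Y k = Matrix.vecMulVec (uvec (nsz k)) ((1 - U)⁻¹.mulVec S) := by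
    rw [h3, h4]
  refine ⟨hmain, fun a col => ?_⟩
  rw [hmain]
  simp [Matrix.vecMulVec_apply, uvec, div_eq_mul_inv, mul_comm]
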